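/- Every finitely generated residually finite group is Hopfian: every surjective group endomorphism is an automorphism. -/
import Mathlib

/-- Every finitely generated residually finite group is Hopfian: every
surjective endomorphism is an automorphism. -/
theorem hopfian_of_fg_residuallyFinite {G : Type*} [Group G] (hfg : Group.FG G)
    (hrf : ∀ g : G, g ≠ 1 →
      ∃ N : Subgroup G, N.Normal ∧ Finite (G ⧸ N) ∧ g ∉ N)
    (f : G →* G) (hf : Function.Surjective f) :
    Function.Bijective f := by
  refine ⟨?_, hf⟩
  rw [← MonoidHom.ker_eq_bot_iff, eq_bot_iff]
  intro g hg
  by_contra hg1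
  simp only [Subgroup.mem_bot] at hg1
  obtain ⟨N, hN, hfin, hgN⟩ := hrf g hg1
  obtain ⟨s, hs⟩ := hfg.1
  -- Homs G → G/N form a finite type
  have hfinhom : Finite (G →* G ⧸ N) := by
    have : Function.Injective (fun (φ : G →* G ⧸ N) => fun x : s => φ x) := by
      intro φ ψ h
      apply MonoidHom.eq_of_eqOn_dense hs
      intro x hx
      exact congrFun h ⟨x, hx⟩
    exact Finite.of_injective _ this
  -- Precomposition with f is injective, hence surjective
  have hinj : Function.Injective (fun (φ : G →* G ⧸ N) => φ.comp f) := by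
    intro φ ψ h
    ext x
    obtain ⟨y, rfl⟩ := hf x
    exact DFunLike.congr_fun h y
  have hsurj := Finite.injective_iff_surjective.mp hinj
  obtain ⟨φ, hφ⟩ := hsurj (QuotientGroup.mk' N)
  have : QuotientGroup.mk' N g = 1 := by
    rw [← hφ]
    simp [MonoidHom.mem_ker.mp hg]
  exact hgN ((QuotientGroup.eq_one_iff g).mp this)
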